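/- Let G be a group and define H_g := {(h, g⁻¹hg) : h ∈ G} ≤ G × G for g ∈ G, and Z* := {g ∈ G : [G : C_G(g)] < ∞}. Then the map g ↦ H_g induces a well-defined injection from the coset space G/Z* into the set of commensurability classes of subgroups of G × G; i.e., H_g and H_{g'} are commensurable if and only if gZ* = g'Z*. -/

import Mathlib

open scoped Pointwise

/-- The graph of conjugation by `g`, a subgroup of `G × G`. -/
def conjGraph {G : Type*} [Group G] (g : G) : Subgroup (G × G) where
  carrier := {p : G × G | p.2 = g⁻¹ * p.1 * g}
  one_mem' := by simp
  mul_mem' := by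
    rintro ⟨a, b⟩ ⟨c, d⟩ hab hcd
    simp only [Set.mem_setOf_eq] at *
    subst hab; subst hcd
    simp only [Prod.fst_mul, Prod.snd_mul]
    group
  inv_mem' := by
    rintro ⟨a, b⟩ hab
    simp only [Set.mem_setOf_eq] at *
    subst hab
    simp only [Prod.fst_inv, Prod.snd_inv]
    group

namespace ConjGraphAux

variable {G : Type*} [Group G]

/-- The embedding `h ↦ (h, g⁻¹ h g)` of `G` into `G × G`. -/
def phi (g : G) : G →* G × G where
  toFun h := (h, g⁻¹ * h * g)
  map_one' := by simp
  map_mul' a b := by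
    ext
    · rfl
    · simp only [Prod.snd_mul]
      group

lemma range_phi (g : G) : (phi g).range = conjGraph g := by
  ext p
  constructor
  · rintro ⟨h, rfl⟩
    show ((phi g) h).2 = g⁻¹ * ((phi g) h).1 * g
    rfl
  · intro hp
    exact ⟨p.1, Prod.ext rfl (Eq.symm (show p.2 = g⁻¹ * p.1 * g from hp))⟩

lemma comap_phi (g g' : G) :
    (conjGraph g').comap (phi g) = Subgroup.centralizer {g * g'⁻¹} := by
  ext h
  simp only [Subgroup.mem_comap, Subgroup.mem_centralizer_singleton_iff]
  show g⁻¹ * h * g = g'⁻¹ * h * g' ↔ _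
  constructor
  · intro e
    have := congrArg (fun z => g * z * g'⁻¹) e
    simpa [mul_assoc] using this
  · intro e
    have := congrArg (fun z => g⁻¹ * z * g') e
    simpa [mul_assoc] using this

lemma relindex_eq (g g' : G) :
    (conjGraph g').relIndex (conjGraph g) = (Subgroup.centralizer {g * g'⁻¹}).index := by
  rw [← comap_phi g g', Subgroup.index_comap, range_phi]

lemma centralizer_inv (x : G) :
    Subgroup.centralizer {x⁻¹} = Subgroup.centralizer ({x} : Set G) := by
  ext h
  simp only [Subgroup.mem_centralizer_singleton_iff]
  constructor
  · intro e
    have := congrArg (fun z => x * z * x) e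
    simpa [mul_assoc] using this.symm
  · intro e
    have := congrArg (fun z => x⁻¹ * z * x⁻¹) e
    simpa [mul_assoc] using this.symm

lemma index_centralizer_conj (a x : G) :
    (Subgroup.centralizer {a * x * a⁻¹}).index = (Subgroup.centralizer {x}).index := by
  have hcomap : (Subgroup.centralizer {a * x * a⁻¹}).comap (MulAut.conj a).toMonoidHom
      = Subgroup.centralizer {x} := by
    ext h
    simp only [Subgroup.mem_comap, Subgroup.mem_centralizer_singleton_iff,
      MulEquiv.coe_toMonoidHom, MulAut.conj_apply]
    constructor
    · intro e
      have := congrArg (fun z => a⁻¹ * z * a) e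
      simpa [mul_assoc] using this
    · intro e
      have := congrArg (fun z => a * z * a⁻¹) e
      simpa [mul_assoc] using this
  have := Subgroup.index_comap (Subgroup.centralizer {a * x * a⁻¹})
    (MulAut.conj a).toMonoidHom
  rw [hcomap] at this
  rw [this, MonoidHom.range_eq_top_of_surjective _ (MulAut.conj a).surjective,
    Subgroup.relIndex_top_right]

/-- The FC-center as a set. -/
abbrev S (G : Type*) [Group G] : Set G := {x : G | (Subgroup.centralizer {x}).index ≠ 0}

lemma one_mem_S : (1 : G) ∈ S G := by
  have h : Subgroup.centralizer ({1} : Set G) = ⊤ := by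
    ext z; simp [Subgroup.mem_centralizer_singleton_iff]
  simp [S, h, Subgroup.index_top]

lemma inv_mem_S {x : G} (hx : x ∈ S G) : x⁻¹ ∈ S G := by
  simpa [S, centralizer_inv] using hx

lemma mul_mem_S {x y : G} (hx : x ∈ S G) (hy : y ∈ S G) : x * y ∈ S G := by
  have hle : Subgroup.centralizer {x} ⊓ Subgroup.centralizer {y}
      ≤ Subgroup.centralizer {x * y} := by
    intro h hh
    rw [Subgroup.mem_inf] at hh
    obtain ⟨h1, h2⟩ := hh
    rw [Subgroup.mem_centralizer_singleton_iff] at h1 h2 ⊢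
    rw [← mul_assoc, h1, mul_assoc, h2, ← mul_assoc]
  have hinf := Subgroup.index_inf_ne_zero hx hy
  intro h0
  exact hinf (zero_dvd_iff.mp (h0 ▸ Subgroup.index_dvd_of_le hle))

lemma conj_mem_S {x : G} (a : G) (hx : x ∈ S G) : a * x * a⁻¹ ∈ S G := by
  simpa [S, index_centralizer_conj] using hx

lemma smul_S_eq_iff (g g' : G) : g • S G = g' • S G ↔ g⁻¹ * g' ∈ S G := by
  constructor
  · intro h
    have : g' ∈ g • S G := by
      rw [h]
      exact ⟨1, one_mem_S, by simp⟩
    obtain ⟨s, hs, hgs⟩ := this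
    have : s = g⁻¹ * g' := by
      simp only [smul_eq_mul] at hgs
      rw [← hgs]; group
    rwa [← this]
  · intro h
    ext z
    constructor
    · rintro ⟨s, hs, rfl⟩
      refine ⟨(g⁻¹ * g')⁻¹ * s, mul_mem_S (inv_mem_S h) hs, ?_⟩
      simp only [smul_eq_mul]; group
    · rintro ⟨s, hs, rfl⟩
      refine ⟨(g⁻¹ * g') * s, mul_mem_S h hs, ?_⟩
      simp only [smul_eq_mul]; group

end ConjGraphAux

/-- The map `g ↦ H_g` induces a well-defined injection from the coset space
`G/Z*` into the commensurability classes of subgroups of `G × G`: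
`H_g` and `H_{g'}` are commensurable iff `g Z* = g' Z*`, where `Z*` is the
FC-center `{x : G | [G : C_G(x)] < ∞}`. -/
theorem conjGraph_commensurable_iff_coset_eq (G : Type*) [Group G] (g g' : G) :
    Subgroup.Commensurable (conjGraph g) (conjGraph g') ↔
      g • {x : G | (Subgroup.centralizer {x}).index ≠ 0} =
        g' • {x : G | (Subgroup.centralizer {x}).index ≠ 0} := by
  open ConjGraphAux in
  rw [smul_S_eq_iff]
  unfold Subgroup.Commensurable
  rw [relindex_eq g' g, relindex_eq g g']
  have hinv : g' * g⁻¹ = (g * g'⁻¹)⁻¹ := by group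
  rw [hinv, centralizer_inv, and_self]
  constructor
  · intro h
    have h2 := ConjGraphAux.conj_mem_S g⁻¹ h
    have : g⁻¹ * (g * g'⁻¹) * g⁻¹⁻¹ = (g⁻¹ * g')⁻¹ := by group
    rw [this] at h2
    simpa using ConjGraphAux.inv_mem_S h2
  · intro h
    have h2 := ConjGraphAux.conj_mem_S g (ConjGraphAux.inv_mem_S h)
    have : g * (g⁻¹ * g')⁻¹ * g⁻¹ = g * g'⁻¹ := by group
    rwa [this] at h2
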